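/- Let H be a finite graph and λ ∈ (0, 1/2] a real number, and set p := λ/(1 + λ). Then Σ_{A ∈ II(H)} λ^|A| ≥ (1 − p²)^{|E(H)|} / (1 − p)^{|V(H)|} ≥ exp(p·|V(H)| − 2p²·|E(H)|). -/

import Mathlib

open Finset


/-- A set of vertices is independent if its vertices are pairwise non-adjacent. -/
def IsIndep {V : Type*} (G : SimpleGraph V) (s : Set V) : Prop :=
  s.Pairwise fun u v => ¬ G.Adj u v


namespace Stmt12Aux

variable {V : Type*} [Fintype V]

open Classical in
noncomputable def Zfun (G : SimpleGraph V) (lam : ℝ) : ℝ :=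
  ∑ s : Set V, if IsIndep G s then lam ^ s.ncard else 0

lemma indep_subset {G : SimpleGraph V} {s t : Set V} (h : IsIndep G t) (hs : s ⊆ t) :
    IsIndep G s := Set.Pairwise.mono hs h

lemma sum_pow_powerset {α : Type*} [DecidableEq α] (s : Finset α) (x : ℝ) :
    ∑ t ∈ s.powerset, x ^ t.card = (1 + x) ^ s.card := by
  induction s using Finset.induction_on with
  | empty => simp
  | insert a s ha ih =>
      rw [Finset.powerset_insert, Finset.sum_union, Finset.sum_image]
      · have : ∀ t ∈ s.powerset, x ^ (insert a t).card = x * x ^ t.card := by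
          intro t ht
          rw [Finset.card_insert_of_notMem (fun h => ha (Finset.mem_powerset.mp ht h))]
          ring
        rw [Finset.sum_congr rfl this, ← Finset.mul_sum, ih,
          Finset.card_insert_of_notMem ha, pow_succ]
        ring
      · intro t ht u hu h
        have ht' : a ∉ t := fun h' => ha (Finset.mem_powerset.mp ht h')
        have hu' : a ∉ u := fun h' => ha (Finset.mem_powerset.mp hu h')
        have := congrArg (Finset.erase · a) h
        simpa [Finset.erase_insert ht', Finset.erase_insert hu'] using this
      · rw [Finset.disjoint_left]
        intro t ht h2
        simp only [Finset.mem_image] at h2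
        obtain ⟨u, hu, rfl⟩ := h2
        exact ha (Finset.mem_powerset.mp ht (Finset.mem_insert_self a u))

open Classical in
lemma sum_over_sets (x : ℝ) : ∑ s : Set V, x ^ s.ncard = (1 + x) ^ Fintype.card V := by
  rw [← Equiv.sum_comp (Fintype.finsetEquivSet (α := V))]
  simp only [Fintype.finsetEquivSet_apply, Set.ncard_coe_finset]
  rw [← Finset.powerset_univ, sum_pow_powerset, Finset.card_univ]

open Classical in
lemma step (G : SimpleGraph V) {u v : V} (huv : G.Adj u v) (lam : ℝ) (hl : 0 < lam) :
    (1 - (lam / (1 + lam)) ^ 2) * Zfun (G.deleteEdges {s(u,v)}) lam ≤ Zfun G lam := by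
  set G' := G.deleteEdges {s(u,v)} with hG'
  have hne : u ≠ v := huv.ne
  have h1l : (0:ℝ) < 1 + lam := by linarith
  have hiff : ∀ s : Set V, IsIndep G s ↔ IsIndep G' s ∧ ¬(u ∈ s ∧ v ∈ s) := by
    intro s
    constructor
    · intro h
      refine ⟨fun a ha b hb hab hadj => h ha hb hab ?_, ?_⟩
      · exact (SimpleGraph.deleteEdges_adj.mp hadj).1
      · rintro ⟨hu, hv⟩
        exact h hu hv huv.ne huv
    · rintro ⟨h, hnb⟩ a ha b hb hab hadj
      by_cases he : s(a,b) = s(u,v)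
      · rw [Sym2.eq_iff] at he
        rcases he with ⟨rfl, rfl⟩ | ⟨rfl, rfl⟩
        · exact hnb ⟨ha, hb⟩
        · exact hnb ⟨hb, ha⟩
      · exact h ha hb hab (SimpleGraph.deleteEdges_adj.mpr ⟨hadj, by simpa using he⟩)
  set S : ℝ := ∑ s : Set V, if IsIndep G' s ∧ u ∈ s ∧ v ∈ s then lam ^ s.ncard else 0 with hS
  have hsplit : Zfun G' lam = Zfun G lam + S := by
    rw [Zfun, Zfun, hS, ← Finset.sum_add_distrib]
    apply Finset.sum_congr rfl
    intro s _
    by_cases h1 : IsIndep G' s <;> by_cases h2 : u ∈ s <;> by_cases h3 : v ∈ s <;>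
      simp [hiff s, h1, h2, h3]
  -- the injection bound : (1+lam)^2 * S ≤ lam^2 * Zfun G' lam
  set A : Finset (Set V) := univ.filter (fun s => IsIndep G' s ∧ u ∈ s ∧ v ∈ s) with hA
  set Φ : Set V × Finset V → Set V := fun q => (q.1 \ {u,v}) ∪ ↑q.2 with hPhi
  set pairs : Finset (Set V × Finset V) := A ×ˢ ({u,v} : Finset V).powerset with hpairs
  have hcoe : ∀ d : Finset V, d ∈ ({u,v} : Finset V).powerset → (↑d : Set V) ⊆ ({u,v} : Set V) := by
    intro d hd
    have := Finset.mem_powerset.mp hd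
    intro x hx
    simpa using this hx
  have hmemA : ∀ s ∈ A, IsIndep G' s ∧ u ∈ s ∧ v ∈ s := by
    intro s hs; simpa [hA] using hs
  have hinter : ∀ (s : Set V) (d : Finset V), (↑d : Set V) ⊆ {u,v} →
      Φ (s, d) ∩ {u,v} = ↑d := by
    intro s d hd
    ext x
    simp only [hPhi, Set.mem_inter_iff, Set.mem_union, Set.mem_diff]
    constructor
    · rintro ⟨h1 | h1, h2⟩
      · exact absurd h2 h1.2
      · exact h1
    · intro hx
      exact ⟨Or.inr hx, hd hx⟩
  have hunion : ∀ (s : Set V) (d : Finset V), u ∈ s → v ∈ s → (↑d : Set V) ⊆ {u,v} →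
      Φ (s, d) ∪ {u,v} = s := by
    intro s d hu hv hd
    ext x
    simp only [hPhi, Set.mem_union, Set.mem_diff]
    constructor
    · rintro ((⟨hx, _⟩ | hx) | hx)
      · exact hx
      · rcases hd hx with rfl | rfl
        · exact hu
        · exact hv
      · rcases hx with rfl | rfl
        · exact hu
        · exact hv
    · intro hx
      by_cases hx2 : x ∈ ({u, v} : Set V)
      · exact Or.inr hx2
      · exact Or.inl (Or.inl ⟨hx, hx2⟩)
  have hinj : ∀ q ∈ pairs, ∀ r ∈ pairs, Φ q = Φ r → q = r := by
    rintro ⟨s, d⟩ hq ⟨t, e⟩ hr h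
    rw [hpairs, Finset.mem_product] at hq hr
    obtain ⟨_, hus, hvs⟩ := hmemA s hq.1
    obtain ⟨_, hut, hvt⟩ := hmemA t hr.1
    have hd := hcoe d hq.2
    have he := hcoe e hr.2
    have h1 : s = t := by
      rw [← hunion s d hus hvs hd, ← hunion t e hut hvt he, h]
    have h2 : d = e := by
      apply Finset.coe_injective
      rw [← hinter s d hd, ← hinter t e he, h]
    exact Prod.ext h1 h2
  have himg : pairs.image Φ ⊆ univ.filter (fun B => IsIndep G' B) := by
    intro B hB
    obtain ⟨⟨s, d⟩, hq, rfl⟩ := Finset.mem_image.mp hB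
    rw [hpairs, Finset.mem_product] at hq
    obtain ⟨hind, hus, hvs⟩ := hmemA s hq.1
    have hd := hcoe d hq.2
    have hsub : Φ (s, d) ⊆ s := by
      apply Set.union_subset (Set.diff_subset)
      refine hd.trans ?_
      intro x hx
      rcases hx with rfl | rfl
      · exact hus
      · exact hvs
    simpa using indep_subset hind hsub
  have hkey : ∑ q ∈ pairs, lam ^ (Φ q).ncard ≤ Zfun G' lam := by
    have himgsum := Finset.sum_image (f := fun B : Set V => lam ^ B.ncard) hinj
    rw [← himgsum]
    calc ∑ B ∈ pairs.image Φ, lam ^ B.ncard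
        ≤ ∑ B ∈ univ.filter (fun B => IsIndep G' B), lam ^ B.ncard :=
          Finset.sum_le_sum_of_subset_of_nonneg himg (fun _ _ _ => by positivity)
      _ = Zfun G' lam := by rw [Zfun, Finset.sum_filter]
  have hcard2 : ({u, v} : Finset V).card = 2 := Finset.card_pair hne
  have hcount : ∀ s ∈ A, ∑ d ∈ ({u,v} : Finset V).powerset, lam ^ (Φ (s, d)).ncard
      = lam ^ (s \ ({u,v} : Set V)).ncard * (1 + lam) ^ 2 := by
    intro s _
    have : ∀ d ∈ ({u,v} : Finset V).powerset,
        lam ^ (Φ (s, d)).ncard = lam ^ (s \ ({u,v} : Set V)).ncard * lam ^ d.card := by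
      intro d hd
      have hdisj : Disjoint (s \ ({u,v} : Set V)) (↑d : Set V) :=
        Set.disjoint_sdiff_left.mono_right (hcoe d hd)
      rw [hPhi]
      simp only
      rw [Set.ncard_union_eq hdisj (Set.toFinite _) (Set.toFinite _),
        Set.ncard_coe_finset, pow_add]
    rw [Finset.sum_congr rfl this, ← Finset.mul_sum, sum_pow_powerset, hcard2]
  have hScard : ∀ s ∈ A, s.ncard = (s \ ({u,v} : Set V)).ncard + 2 := by
    intro s hs
    obtain ⟨_, hus, hvs⟩ := hmemA s hs
    have hsub : ({u, v} : Set V) ⊆ s := by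
      intro x hx
      rcases hx with rfl | rfl
      · exact hus
      · exact hvs
    have hu : (s \ ({u,v} : Set V)) ∪ {u, v} = s := Set.diff_union_of_subset hsub
    have h2 := Set.ncard_union_eq (s := s \ ({u,v} : Set V)) (t := ({u,v} : Set V))
      Set.disjoint_sdiff_left (Set.toFinite _) (Set.toFinite _)
    rw [hu, Set.ncard_pair hne] at h2
    exact h2
  have hSb : (1 + lam) ^ 2 * S ≤ lam ^ 2 * Zfun G' lam := by
    have hSA : S = ∑ s ∈ A, lam ^ s.ncard := by
      rw [hS, hA, Finset.sum_filter]
    calc (1 + lam) ^ 2 * S = ∑ s ∈ A, lam ^ 2 * (lam ^ (s \ ({u,v} : Set V)).ncard * (1 + lam) ^ 2) := by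
          rw [hSA, Finset.mul_sum]
          apply Finset.sum_congr rfl
          intro s hs
          rw [hScard s hs, pow_add]
          ring
      _ = lam ^ 2 * ∑ q ∈ pairs, lam ^ (Φ q).ncard := by
          rw [Finset.mul_sum, hpairs, Finset.sum_product]
          apply Finset.sum_congr rfl
          intro s hs
          rw [← Finset.mul_sum, hcount s hs]
      _ ≤ lam ^ 2 * Zfun G' lam := by
          apply mul_le_mul_of_nonneg_left hkey (by positivity)
  have hfrac : S ≤ (lam / (1 + lam)) ^ 2 * Zfun G' lam := by
    rw [div_pow, div_mul_eq_mul_div, le_div_iff₀ (by positivity)]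
    calc S * (1 + lam) ^ 2 = (1 + lam) ^ 2 * S := by ring
      _ ≤ lam ^ 2 * Zfun G' lam := hSb
  linarith [hsplit, hfrac]


open Classical in
lemma main (lam : ℝ) (hl : 0 < lam) (m : ℕ) :
    ∀ H : SimpleGraph V, Nat.card H.edgeSet = m →
      (1 - (lam / (1 + lam)) ^ 2) ^ m * (1 + lam) ^ (Fintype.card V) ≤ Zfun H lam := by
  induction m using Nat.strong_induction_on with
  | _ m ih =>
    intro H hm
    have h1l : (0:ℝ) < 1 + lam := by linarith
    have hp1 : lam / (1 + lam) < 1 := by rw [div_lt_one h1l]; linarith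
    have hp0 : 0 ≤ lam / (1 + lam) := by positivity
    have hq0 : (0:ℝ) ≤ 1 - (lam / (1 + lam)) ^ 2 := by nlinarith
    have hq1 : 1 - (lam / (1 + lam)) ^ 2 ≤ 1 := by nlinarith
    by_cases hA : ∃ a b, H.Adj a b
    · obtain ⟨a, b, hab⟩ := hA
      set G' := H.deleteEdges {s(a,b)} with hG'
      have hedge : s(a,b) ∈ H.edgeSet := hab
      have hh : H.edgeSet.ncard = m := by rw [← Nat.card_coe_set_eq]; exact hm
      have hmpos : 0 < m := by
        rw [← hh]
        exact (Set.ncard_pos (Set.toFinite _)).mpr ⟨_, hedge⟩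
      have hm' : Nat.card G'.edgeSet = m - 1 := by
        rw [Nat.card_coe_set_eq, hG', SimpleGraph.edgeSet_deleteEdges,
          Set.ncard_diff_singleton_of_mem hedge, hh]
      have h1 := ih (m - 1) (by omega) G' hm'
      have h2 := step H hab lam hl
      calc (1 - (lam / (1 + lam)) ^ 2) ^ m * (1 + lam) ^ (Fintype.card V)
          = (1 - (lam / (1 + lam)) ^ 2) *
            ((1 - (lam / (1 + lam)) ^ 2) ^ (m - 1) * (1 + lam) ^ (Fintype.card V)) := by
            conv_lhs => rw [show m = (m - 1) + 1 from by omega]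
            rw [pow_succ]
            ring
        _ ≤ (1 - (lam / (1 + lam)) ^ 2) * Zfun G' lam :=
            mul_le_mul_of_nonneg_left h1 hq0
        _ ≤ Zfun H lam := h2
    · have hall : ∀ s : Set V, IsIndep H s := fun s x _ y _ _ h => hA ⟨x, y, h⟩
      have hZ : Zfun H lam = (1 + lam) ^ (Fintype.card V) := by
        rw [Zfun, Finset.sum_congr rfl (fun s _ => if_pos (hall s)), sum_over_sets]
      rw [hZ]
      calc (1 - (lam / (1 + lam)) ^ 2) ^ m * (1 + lam) ^ (Fintype.card V)
          ≤ 1 * (1 + lam) ^ (Fintype.card V) :=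
            mul_le_mul_of_nonneg_right (pow_le_one₀ hq0 hq1) (by positivity)
        _ = (1 + lam) ^ (Fintype.card V) := one_mul _

lemma analytic (p : ℝ) (h0 : 0 < p) (h3 : p ≤ 1/3) (n m : ℕ) :
    Real.exp (p * n - 2 * p ^ 2 * m) ≤ (1 - p ^ 2) ^ m / (1 - p) ^ n := by
  have h1p : (0:ℝ) < 1 - p := by linarith
  have h1p2 : (0:ℝ) < 1 - p ^ 2 := by nlinarith
  have e1 : Real.exp p ≤ 1 / (1 - p) := by
    rw [le_div_iff₀ h1p]
    have hh := Real.add_one_le_exp (-p)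
    calc Real.exp p * (1 - p) ≤ Real.exp p * Real.exp (-p) :=
          mul_le_mul_of_nonneg_left (by linarith) (Real.exp_pos p).le
      _ = 1 := by rw [← Real.exp_add]; simp
  have e2 : Real.exp (-(2 * p ^ 2)) ≤ 1 - p ^ 2 := by
    have hh := Real.add_one_le_exp (2 * p ^ 2)
    rw [Real.exp_neg]
    calc (Real.exp (2 * p ^ 2))⁻¹ ≤ (1 + 2 * p ^ 2)⁻¹ := by
          apply inv_anti₀ (by positivity) (by linarith)
      _ ≤ 1 - p ^ 2 := by
          have hp2 : p ^ 2 ≤ 1/9 := by nlinarith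
          rw [inv_eq_one_div, div_le_iff₀ (by positivity)]
          nlinarith [sq_nonneg p, hp2, mul_le_mul_of_nonneg_left hp2 (sq_nonneg p)]
  have hxp : p * n - 2 * p ^ 2 * m = (n : ℝ) * p + (m : ℝ) * (-(2 * p ^ 2)) := by ring
  rw [hxp, Real.exp_add, Real.exp_nat_mul, Real.exp_nat_mul]
  have b1 : Real.exp p ^ n ≤ (1 / (1 - p)) ^ n := pow_le_pow_left₀ (Real.exp_pos p).le e1 n
  have b2 : Real.exp (-(2 * p ^ 2)) ^ m ≤ (1 - p ^ 2) ^ m :=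
    pow_le_pow_left₀ (Real.exp_pos _).le e2 m
  calc Real.exp p ^ n * Real.exp (-(2 * p ^ 2)) ^ m
      ≤ (1 / (1 - p)) ^ n * (1 - p ^ 2) ^ m := by
        apply mul_le_mul b1 b2 (by positivity) (by positivity)
    _ = (1 - p ^ 2) ^ m / (1 - p) ^ n := by
        rw [div_pow, one_pow]
        ring

end Stmt12Aux

/-- For a finite graph `H` and `λ ∈ (0, 1/2]`, with `p := λ/(1+λ)`:
`Σ_{A ∈ II(H)} λ^|A| ≥ (1−p²)^|E(H)| / (1−p)^|V(H)| ≥ exp(p·|V(H)| − 2p²·|E(H)|)`. -/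
theorem stmt_12 {V : Type*} [Fintype V] (H : SimpleGraph V) (lam : ℝ)
    (hlam0 : 0 < lam) (hlam1 : lam ≤ 1 / 2) (p : ℝ) (hp : p = lam / (1 + lam)) :
    ((1 - p ^ 2) ^ (Nat.card H.edgeSet) / (1 - p) ^ (Fintype.card V) ≤
      ∑ᶠ A ∈ {s : Set V | IsIndep H s}, lam ^ A.ncard) ∧
    Real.exp (p * Fintype.card V - 2 * p ^ 2 * Nat.card H.edgeSet) ≤
      (1 - p ^ 2) ^ (Nat.card H.edgeSet) / (1 - p) ^ (Fintype.card V) := by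
  classical
  have h1l : (0:ℝ) < 1 + lam := by linarith
  constructor
  · have hconv : ∑ᶠ A ∈ {s : Set V | IsIndep H s}, lam ^ A.ncard = Stmt12Aux.Zfun H lam := by
      have hfin : {s : Set V | IsIndep H s}.Finite := Set.toFinite _
      rw [finsum_mem_eq_finite_toFinset_sum _ hfin, Stmt12Aux.Zfun, ← Finset.sum_filter]
      congr 1
      ext s
      simp [Set.Finite.mem_toFinset]
    have h1p : (1:ℝ) - p = 1 / (1 + lam) := by
      rw [hp]
      field_simp
      ring
    rw [hconv, h1p, div_pow, one_pow, div_div_eq_mul_div, div_one, hp]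
    exact Stmt12Aux.main lam hlam0 (Nat.card H.edgeSet) H rfl
  · apply Stmt12Aux.analytic
    · rw [hp]; positivity
    · rw [hp, div_le_iff₀ h1l]; linarith
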